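/- Let A ∈ ℂ^{n×n} with rank(A²) = rank(A) and full-rank decomposition A = BG. Then X = B(GB)⁻¹(B*B)⁻¹B* satisfies XAX = X, AXA = A, (AX)* = AX, and range(X) = range(A). -/
import Mathlib


open Matrix

lemma aux_isUnit_det_of_rank {r : ℕ} (M : Matrix (Fin r) (Fin r) ℂ) (h : M.rank = r) :
    IsUnit M.det := by
  rw [isUnit_iff_ne_zero]
  intro hd
  obtain ⟨v, hv, hMv⟩ := (Matrix.exists_mulVec_eq_zero_iff).2 hd
  have hrn := LinearMap.finrank_range_add_finrank_ker M.mulVecLin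
  rw [Module.finrank_fin_fun] at hrn
  have hrank : M.rank = Module.finrank ℂ (LinearMap.range M.mulVecLin) := rfl
  have hker : Module.finrank ℂ (LinearMap.ker M.mulVecLin) = 0 := by omega
  have : LinearMap.ker M.mulVecLin = ⊥ := Submodule.finrank_eq_zero.mp hker
  have hv' : v ∈ LinearMap.ker M.mulVecLin := hMv
  rw [this, Submodule.mem_bot] at hv'
  exact hv hv'

theorem stmt_11 {n r : ℕ} (A : Matrix (Fin n) (Fin n) ℂ)
    (hind : (A * A).rank = A.rank)
    (B : Matrix (Fin n) (Fin r) ℂ) (G : Matrix (Fin r) (Fin n) ℂ)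
    (hr : r = A.rank) (hB : B.rank = r) (hG : G.rank = r) (hA : A = B * G) :
    (B * (G * B)⁻¹ * (Bᴴ * B)⁻¹ * Bᴴ) * A * (B * (G * B)⁻¹ * (Bᴴ * B)⁻¹ * Bᴴ)
        = B * (G * B)⁻¹ * (Bᴴ * B)⁻¹ * Bᴴ ∧
      A * (B * (G * B)⁻¹ * (Bᴴ * B)⁻¹ * Bᴴ) * A = A ∧
      (A * (B * (G * B)⁻¹ * (Bᴴ * B)⁻¹ * Bᴴ))ᴴ = A * (B * (G * B)⁻¹ * (Bᴴ * B)⁻¹ * Bᴴ) ∧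
      LinearMap.range (B * (G * B)⁻¹ * (Bᴴ * B)⁻¹ * Bᴴ).mulVecLin
        = LinearMap.range A.mulVecLin := by
  -- invertibility of Bᴴ * B
  have hBB : IsUnit (Bᴴ * B).det := by
    apply aux_isUnit_det_of_rank
    open ComplexOrder in
    rw [Matrix.rank_conjTranspose_mul_self, hB]
  -- invertibility of G * B
  have hGBrank : (G * B).rank = r := by
    have h1 : (A * A).rank ≤ (G * B).rank := by
      have : A * A = B * ((G * B) * G) := by
        rw [hA]; simp only [Matrix.mul_assoc]
      rw [this]
      exact le_trans (Matrix.rank_mul_le_right _ _) (Matrix.rank_mul_le_left _ _)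
    have h2 : (G * B).rank ≤ r := le_trans (Matrix.rank_le_card_width _) (by simp)
    omega
  have hGB : IsUnit (G * B).det := aux_isUnit_det_of_rank _ hGBrank
  set X := B * (G * B)⁻¹ * (Bᴴ * B)⁻¹ * Bᴴ with hX
  -- key products
  have hXA : X * A = B * ((G * B)⁻¹ * G) := by
    rw [hX, hA]
    calc B * (G * B)⁻¹ * (Bᴴ * B)⁻¹ * Bᴴ * (B * G)
        = B * (G * B)⁻¹ * ((Bᴴ * B)⁻¹ * (Bᴴ * B)) * G := by
          simp only [Matrix.mul_assoc]
      _ = B * ((G * B)⁻¹ * G) := by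
          rw [Matrix.nonsing_inv_mul _ hBB, Matrix.mul_one, Matrix.mul_assoc]
  have hAX : A * X = B * (Bᴴ * B)⁻¹ * Bᴴ := by
    rw [hX, hA]
    calc B * G * (B * (G * B)⁻¹ * (Bᴴ * B)⁻¹ * Bᴴ)
        = B * ((G * B) * (G * B)⁻¹) * ((Bᴴ * B)⁻¹ * Bᴴ) := by
          simp only [Matrix.mul_assoc]
      _ = B * (Bᴴ * B)⁻¹ * Bᴴ := by
          rw [Matrix.mul_nonsing_inv _ hGB, Matrix.mul_one, Matrix.mul_assoc]
  have h1 : X * A * X = X := by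
    rw [hXA, hX]
    calc B * ((G * B)⁻¹ * G) * (B * (G * B)⁻¹ * (Bᴴ * B)⁻¹ * Bᴴ)
        = B * ((G * B)⁻¹ * (G * B)) * ((G * B)⁻¹ * ((Bᴴ * B)⁻¹ * Bᴴ)) := by
          simp only [Matrix.mul_assoc]
      _ = B * (G * B)⁻¹ * (Bᴴ * B)⁻¹ * Bᴴ := by
          rw [Matrix.nonsing_inv_mul _ hGB, Matrix.mul_one]
          simp only [Matrix.mul_assoc]
  have h2 : A * X * A = A := by
    rw [hAX]
    conv_lhs => rw [hA]
    calc B * (Bᴴ * B)⁻¹ * Bᴴ * (B * G)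
        = B * ((Bᴴ * B)⁻¹ * (Bᴴ * B)) * G := by simp only [Matrix.mul_assoc]
      _ = B * G := by rw [Matrix.nonsing_inv_mul _ hBB, Matrix.mul_one]
      _ = A := hA.symm
  have h3 : (A * X)ᴴ = A * X := by
    rw [hAX]
    simp only [Matrix.conjTranspose_mul, Matrix.conjTranspose_conjTranspose,
      Matrix.conjTranspose_nonsing_inv]
    rw [Matrix.mul_assoc]
  have hAXX : A * (X * X) = X := by
    rw [← Matrix.mul_assoc, hAX, hX]
    calc B * (Bᴴ * B)⁻¹ * Bᴴ * (B * (G * B)⁻¹ * (Bᴴ * B)⁻¹ * Bᴴ)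
        = B * ((Bᴴ * B)⁻¹ * (Bᴴ * B)) * ((G * B)⁻¹ * ((Bᴴ * B)⁻¹ * Bᴴ)) := by
          simp only [Matrix.mul_assoc]
      _ = B * (G * B)⁻¹ * (Bᴴ * B)⁻¹ * Bᴴ := by
          rw [Matrix.nonsing_inv_mul _ hBB, Matrix.mul_one]
          simp only [Matrix.mul_assoc]
  have hXAA : X * (A * A) = A := by
    rw [← Matrix.mul_assoc, hXA]
    conv_lhs => rw [hA]
    calc B * ((G * B)⁻¹ * G) * (B * G)
        = B * ((G * B)⁻¹ * (G * B)) * G := by simp only [Matrix.mul_assoc]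
      _ = B * G := by rw [Matrix.nonsing_inv_mul _ hGB, Matrix.mul_one]
      _ = A := hA.symm
  refine ⟨h1, h2, h3, le_antisymm ?_ ?_⟩
  · rw [← hAXX, Matrix.mulVecLin_mul]
    exact LinearMap.range_comp_le_range _ _
  · rw [show A.mulVecLin = (X * (A * A)).mulVecLin by rw [hXAA], Matrix.mulVecLin_mul]
    exact LinearMap.range_comp_le_range _ _
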